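/- Let n ≥ 2, let H be an n×n real symmetric positive definite matrix, let Q_m be an n×n real matrix with Q_m + Q_mᵀ positive semidefinite, B = diag(−1,0,…,0,1), D_m = H⁻¹(Q_m + B/2), e₀ = (1,0,…,0)ᵀ, and τ ≤ −1/2. Write ‖x‖_H = √(xᵀHx). If ζ : [0,T] → ℝⁿ is differentiable, d : [0,T] → ℝⁿ is continuous, and ζ'(t) = −D_m ζ(t) + τ H⁻¹ e₀ (ζ(t))₁ + d(t) for all t ∈ [0,T], then for every t ∈ [0,T]: ‖ζ(t)‖_H ≤ ‖ζ(0)‖_H + ∫₀ᵗ ‖d(s)‖_H ds. -/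

import Mathlib

open Matrix intervalIntegral MeasureTheory

lemma sqrt_add_eps' {x ε : ℝ} (hx : 0 ≤ x) (hε : 0 ≤ ε) :
    Real.sqrt (x + ε^2) ≤ Real.sqrt x + ε := by
  have h1 : x + ε^2 ≤ (Real.sqrt x + ε)^2 := by
    nlinarith [Real.sq_sqrt hx, Real.sqrt_nonneg x]
  calc Real.sqrt (x + ε^2) ≤ Real.sqrt ((Real.sqrt x + ε)^2) := Real.sqrt_le_sqrt h1
    _ = Real.sqrt x + ε := Real.sqrt_sq (by positivity)

lemma gronwall_aux' (T : ℝ) (hT : 0 ≤ T) (E E' g : ℝ → ℝ)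
    (hE : ∀ t ∈ Set.Icc (0:ℝ) T, HasDerivAt E (E' t) t)
    (hEnn : ∀ t ∈ Set.Icc (0:ℝ) T, 0 ≤ E t)
    (hg : ContinuousOn g (Set.Icc (0:ℝ) T))
    (hgnn : ∀ t ∈ Set.Icc (0:ℝ) T, 0 ≤ g t)
    (hkey : ∀ t ∈ Set.Icc (0:ℝ) T, E' t ≤ 2 * Real.sqrt (E t) * g t) :
    ∀ t ∈ Set.Icc (0:ℝ) T,
      Real.sqrt (E t) ≤ Real.sqrt (E 0) + ∫ s in (0:ℝ)..t, g s := by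
  intro t ht
  have huIcc : Set.uIcc (0:ℝ) T = Set.Icc 0 T := Set.uIcc_of_le hT
  have hgint : IntegrableOn g (Set.uIcc (0:ℝ) T) MeasureTheory.volume := by
    rw [huIcc]; exact hg.integrableOn_compact isCompact_Icc
  have hGcont : ContinuousOn (fun t => ∫ s in (0:ℝ)..t, g s) (Set.Icc (0:ℝ) T) := by
    rw [← huIcc]; exact intervalIntegral.continuousOn_primitive_interval hgint
  refine le_of_forall_pos_le_add fun ε hε => ?_
  set φ : ℝ → ℝ := fun x => Real.sqrt (E x + ε ^ 2) with hφdef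
  set F : ℝ → ℝ := fun x => φ x - ∫ s in (0:ℝ)..x, g s with hFdef
  have hEcont : ContinuousOn E (Set.Icc 0 T) := fun x hx =>
    ((hE x hx).continuousAt).continuousWithinAt
  have hφcont : ContinuousOn φ (Set.Icc 0 T) :=
    Real.continuous_sqrt.comp_continuousOn (hEcont.add continuousOn_const)
  have hFderiv : ∀ x ∈ Set.Ioo (0:ℝ) T,
      HasDerivAt F (1 / (2 * Real.sqrt (E x + ε ^ 2)) * E' x - g x) x := by
    intro x hx
    have hxI : x ∈ Set.Icc (0:ℝ) T := Set.mem_Icc_of_Ioo hx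
    have hExnn := hEnn x hxI
    have hne : E x + ε ^ 2 ≠ 0 := by positivity
    have hφ' : HasDerivAt φ (1 / (2 * Real.sqrt (E x + ε ^ 2)) * E' x) x :=
      (Real.hasDerivAt_sqrt hne).comp x ((hE x hxI).add_const (ε ^ 2))
    have hIccnhds : Set.Icc (0:ℝ) T ∈ nhds x := Icc_mem_nhds hx.1 hx.2
    have hgx : ContinuousAt g x := hg.continuousAt hIccnhds
    have hint : IntervalIntegrable g MeasureTheory.volume 0 x :=
      (hg.mono (by rw [Set.uIcc_of_le hxI.1]; exact Set.Icc_subset_Icc le_rfl hxI.2)).intervalIntegrable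
    have hG' : HasDerivAt (fun u => ∫ s in (0:ℝ)..u, g s) (g x) x :=
      intervalIntegral.integral_hasDerivAt_right hint
        (ContinuousAt.stronglyMeasurableAtFilter isOpen_Ioo
          (fun y hy => hg.continuousAt (Icc_mem_nhds hy.1 hy.2)) x hx) hgx
    exact hφ'.sub hG'
  have hFanti : AntitoneOn F (Set.Icc 0 T) := by
    apply antitoneOn_of_deriv_nonpos (convex_Icc 0 T) (hφcont.sub hGcont)
    · intro x hx
      rw [interior_Icc] at hx
      exact (hFderiv x hx).differentiableAt.differentiableWithinAt
    · intro x hx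
      rw [interior_Icc] at hx
      change deriv F x ≤ 0
      rw [(hFderiv x hx).deriv]
      have hxI : x ∈ Set.Icc (0:ℝ) T := Set.mem_Icc_of_Ioo hx
      have hExnn := hEnn x hxI
      have hs : 0 < Real.sqrt (E x + ε ^ 2) := Real.sqrt_pos.2 (by positivity)
      have hle : Real.sqrt (E x) ≤ Real.sqrt (E x + ε ^ 2) :=
        Real.sqrt_le_sqrt (by nlinarith)
      have h1 : E' x ≤ 2 * Real.sqrt (E x + ε ^ 2) * g x := by
        refine (hkey x hxI).trans ?_
        have := hgnn x hxI
        nlinarith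
      rw [sub_nonpos, one_div, inv_mul_le_iff₀ (by positivity)]
      linarith
  have h0 : F t ≤ F 0 := hFanti (Set.left_mem_Icc.2 hT) ht ht.1
  have hst : Real.sqrt (E t) ≤ φ t := Real.sqrt_le_sqrt (by nlinarith)
  have hφ0 : φ 0 ≤ Real.sqrt (E 0) + ε :=
    sqrt_add_eps' (hEnn 0 (Set.left_mem_Icc.2 hT)) hε.le
  simp only [hFdef, intervalIntegral.integral_same, sub_zero] at h0
  linarith [h0]

lemma dot_cs' {n : ℕ} (x y : Fin n → ℝ) :
    x ⬝ᵥ y ≤ Real.sqrt (x ⬝ᵥ x) * Real.sqrt (y ⬝ᵥ y) := by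
  have hxx : x ⬝ᵥ x = ∑ i, x i ^ 2 := by simp [dotProduct, sq]
  have hyy : y ⬝ᵥ y = ∑ i, y i ^ 2 := by simp [dotProduct, sq]
  have h := Finset.sum_mul_sq_le_sq_mul_sq Finset.univ x y
  calc x ⬝ᵥ y ≤ |x ⬝ᵥ y| := le_abs_self _
    _ = Real.sqrt ((x ⬝ᵥ y) ^ 2) := (Real.sqrt_sq_eq_abs _).symm
    _ ≤ Real.sqrt ((x ⬝ᵥ x) * (y ⬝ᵥ y)) := Real.sqrt_le_sqrt (by rw [hxx, hyy]; exact h)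
    _ = Real.sqrt (x ⬝ᵥ x) * Real.sqrt (y ⬝ᵥ y) := Real.sqrt_mul (by rw [hxx]; positivity) _

open scoped MatrixOrder in
lemma dot_cs_H' {n : ℕ} {H : Matrix (Fin n) (Fin n) ℝ} (hH : H.PosSemidef)
    (x y : Fin n → ℝ) :
    x ⬝ᵥ (H *ᵥ y) ≤ Real.sqrt (x ⬝ᵥ (H *ᵥ x)) * Real.sqrt (y ⬝ᵥ (H *ᵥ y)) := by
  set A := CFC.sqrt H with hA
  have hAA : A * A = H := CFC.sqrt_mul_sqrt_self H hH.nonneg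
  have hAsymm : Aᵀ = A := by
    have := (Matrix.nonneg_iff_posSemidef.mp (CFC.sqrt_nonneg H)).isHermitian
    rw [← Matrix.conjTranspose_eq_transpose_of_trivial]; exact this
  have key : ∀ u v : Fin n → ℝ, u ⬝ᵥ (H *ᵥ v) = (A *ᵥ u) ⬝ᵥ (A *ᵥ v) := by
    intro u v
    rw [← hAA, ← Matrix.mulVec_mulVec, Matrix.dotProduct_mulVec, ← Matrix.mulVec_transpose,
      hAsymm]
  rw [key x y, key x x, key y y]
  exact dot_cs' _ _

lemma hasDerivAt_quadform' {n : ℕ} (H : Matrix (Fin n) (Fin n) ℝ)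
    (hsymm : ∀ i j, H i j = H j i) {f : ℝ → Fin n → ℝ} {v : Fin n → ℝ} {t : ℝ}
    (hf : HasDerivAt f v t) :
    HasDerivAt (fun s => f s ⬝ᵥ (H *ᵥ f s)) (2 * (f t ⬝ᵥ (H *ᵥ v))) t := by
  have hfi : ∀ i, HasDerivAt (fun s => f s i) (v i) t := fun i => hasDerivAt_pi.1 hf i
  have h1 : HasDerivAt (fun s => ∑ i, ∑ j, f s i * (H i j * f s j))
      (∑ i, ∑ j, (v i * (H i j * f t j) + f t i * (H i j * v j))) t := by
    apply HasDerivAt.fun_sum; intro i _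
    apply HasDerivAt.fun_sum; intro j _
    exact (hfi i).mul ((hfi j).const_mul (H i j))
  have heq : (fun s => ∑ i, ∑ j, f s i * (H i j * f s j))
      = fun s => f s ⬝ᵥ (H *ᵥ f s) := by
    funext s
    simp [dotProduct, Matrix.mulVec, Finset.mul_sum]
  have hval : (∑ i, ∑ j, (v i * (H i j * f t j) + f t i * (H i j * v j)))
      = 2 * (f t ⬝ᵥ (H *ᵥ v)) := by
    simp only [Finset.sum_add_distrib]
    have h2 : ∑ i, ∑ j, f t i * (H i j * v j) = f t ⬝ᵥ (H *ᵥ v) := by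
      simp [dotProduct, Matrix.mulVec, Finset.mul_sum]
    have h3 : ∑ i, ∑ j, v i * (H i j * f t j) = f t ⬝ᵥ (H *ᵥ v) := by
      rw [Finset.sum_comm]
      simp only [dotProduct, Matrix.mulVec, Finset.mul_sum]
      apply Finset.sum_congr rfl; intro j _
      apply Finset.sum_congr rfl; intro i _
      rw [hsymm i j]; ring
    rw [h2, h3]; ring
  rw [heq, hval] at h1
  exact h1

/-- Energy estimate for the error equation of the upwind SBP-SAT
semidiscretization of the advection equation with truncation error `d` as
forcing: `‖ζ(t)‖_H ≤ ‖ζ(0)‖_H + ∫₀ᵗ ‖d(s)‖_H ds`. -/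
theorem stmt_12 (n : ℕ) (hn : 2 ≤ n) (T : ℝ) (hT : 0 ≤ T)
    (H Qm : Matrix (Fin n) (Fin n) ℝ)
    (hH : H.PosDef) (hQ : (Qm + Qmᵀ).PosSemidef)
    (B : Matrix (Fin n) (Fin n) ℝ)
    (hB : B = Matrix.diagonal (fun i =>
      if i.val = 0 then (-1 : ℝ) else if i.val = n - 1 then 1 else 0))
    (Dm : Matrix (Fin n) (Fin n) ℝ)
    (hDm : Dm = H⁻¹ * (Qm + (1/2 : ℝ) • B))
    (e₀ : Fin n → ℝ) (he₀ : e₀ = fun i => if i.val = 0 then 1 else 0)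
    (τ : ℝ) (hτ : τ ≤ -1/2)
    (ζ d : ℝ → Fin n → ℝ)
    (hζ : ∀ t ∈ Set.Icc (0:ℝ) T, HasDerivAt ζ
      (-(Dm *ᵥ ζ t) + (τ * ζ t ⟨0, by omega⟩) • (H⁻¹ *ᵥ e₀) + d t) t)
    (hd : ContinuousOn d (Set.Icc (0:ℝ) T)) :
    ∀ t ∈ Set.Icc (0:ℝ) T,
      Real.sqrt (ζ t ⬝ᵥ (H *ᵥ ζ t)) ≤
        Real.sqrt (ζ 0 ⬝ᵥ (H *ᵥ ζ 0))
          + ∫ s in (0:ℝ)..t, Real.sqrt (d s ⬝ᵥ (H *ᵥ d s)) := by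
  have hn0 : 0 < n := by omega
  set i0 : Fin n := ⟨0, by omega⟩ with hi0
  set i1 : Fin n := ⟨n - 1, by omega⟩ with hi1
  have h01 : i0 ≠ i1 := by
    simp only [hi0, hi1, ne_eq, Fin.mk.injEq]
    omega
  set v : ℝ → Fin n → ℝ :=
    fun t => -(Dm *ᵥ ζ t) + (τ * ζ t i0) • (H⁻¹ *ᵥ e₀) + d t with hv
  set E : ℝ → ℝ := fun t => ζ t ⬝ᵥ (H *ᵥ ζ t) with hE
  set E' : ℝ → ℝ := fun t => 2 * (ζ t ⬝ᵥ (H *ᵥ v t)) with hE'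
  set g : ℝ → ℝ := fun t => Real.sqrt (d t ⬝ᵥ (H *ᵥ d t)) with hg
  -- symmetry of H
  have hsymm : ∀ i j, H i j = H j i := fun i j => by
    have := hH.1.apply i j
    simpa using this.symm
  -- basic identities
  have hHinv : H * H⁻¹ = 1 :=
    Matrix.mul_nonsing_inv H (isUnit_iff_ne_zero.2 hH.det_pos.ne')
  have hHDm : H * Dm = Qm + (1/2 : ℝ) • B := by
    rw [hDm, ← Matrix.mul_assoc, hHinv, one_mul]
  have hHe : H *ᵥ (H⁻¹ *ᵥ e₀) = e₀ := by
    rw [Matrix.mulVec_mulVec, hHinv, Matrix.one_mulVec]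
  have hζe : ∀ x : Fin n → ℝ, x ⬝ᵥ e₀ = x i0 := by
    intro x
    rw [he₀]
    have h1 : ∀ i : Fin n, x i * (if i.val = 0 then (1:ℝ) else 0)
        = if i = i0 then x i else 0 := by
      intro i
      by_cases h : i = i0
      · subst h; simp [hi0]
      · have : i.val ≠ 0 := fun hc => h (Fin.ext (by simp [hi0, hc]))
        simp [this, h]
    calc x ⬝ᵥ (fun i => if i.val = 0 then (1:ℝ) else 0)
        = ∑ i, if i = i0 then x i else 0 := Finset.sum_congr rfl (fun i _ => h1 i)
      _ = x i0 := by simp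
  have hB2 : ∀ x : Fin n → ℝ, x ⬝ᵥ (B *ᵥ x) = -(x i0 * x i0) + x i1 * x i1 := by
    intro x
    rw [hB]
    have h1 : ∀ i : Fin n,
        x i * ((if i.val = 0 then (-1:ℝ) else if i.val = n - 1 then 1 else 0) * x i)
        = (if i = i0 then -(x i * x i) else 0) + (if i = i1 then x i * x i else 0) := by
      intro i
      by_cases h : i = i0
      · subst h
        have : (i0 : Fin n).val = 0 := rfl
        simp [this, h01, hi0]
        exact fun h => absurd (hi0.trans h) h01
      · by_cases h' : i = i1
        · subst h'
          have hv1 : (i1 : Fin n).val = n - 1 := rfl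
          have hv0 : (i1 : Fin n).val ≠ 0 := by simp [hi1]; omega
          simp [hv1, hv0, h]
          exact fun h => absurd (hv1.trans h) hv0
        · have hne0 : i.val ≠ 0 := fun hc => h (Fin.ext (by simp [hi0, hc]))
          have hne1 : i.val ≠ n - 1 := fun hc => h' (Fin.ext (by simp [hi1, hc]))
          simp [hne0, hne1, h, h']
    calc x ⬝ᵥ (Matrix.diagonal _ *ᵥ x)
        = ∑ i, x i * ((if i.val = 0 then (-1:ℝ) else if i.val = n - 1 then 1 else 0) * x i) := by
          simp [dotProduct, Matrix.mulVec_diagonal]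
      _ = ∑ i, ((if i = i0 then -(x i * x i) else 0) + (if i = i1 then x i * x i else 0)) :=
          Finset.sum_congr rfl (fun i _ => h1 i)
      _ = -(x i0 * x i0) + x i1 * x i1 := by
          rw [Finset.sum_add_distrib]
          simp
  have hQ2 : ∀ x : Fin n → ℝ, 0 ≤ x ⬝ᵥ (Qm *ᵥ x) := by
    intro x
    have h := hQ.dotProduct_mulVec_nonneg x
    simp only [star_trivial] at h
    have heq : x ⬝ᵥ ((Qm + Qmᵀ) *ᵥ x) = 2 * (x ⬝ᵥ (Qm *ᵥ x)) := by
      rw [Matrix.add_mulVec]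
      rw [dotProduct_add]
      have : x ⬝ᵥ (Qmᵀ *ᵥ x) = x ⬝ᵥ (Qm *ᵥ x) := by
        rw [Matrix.mulVec_transpose, dotProduct_comm, ← Matrix.dotProduct_mulVec]
      rw [this]; ring
    rw [heq] at h
    linarith
  -- H *ᵥ v t
  have hHv : ∀ t, H *ᵥ v t
      = -(Qm *ᵥ ζ t) + (-(1/2 : ℝ)) • (B *ᵥ ζ t) + (τ * ζ t i0) • e₀ + H *ᵥ d t := by
    intro t
    show H *ᵥ (-(Dm *ᵥ ζ t) + (τ * ζ t i0) • (H⁻¹ *ᵥ e₀) + d t) = _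
    rw [Matrix.mulVec_add, Matrix.mulVec_add, Matrix.mulVec_neg, Matrix.mulVec_smul,
      Matrix.mulVec_mulVec, hHDm, hHe, Matrix.add_mulVec, Matrix.smul_mulVec]
    module
  -- pointwise key bound
  have hkey : ∀ t ∈ Set.Icc (0:ℝ) T, E' t ≤ 2 * Real.sqrt (E t) * g t := by
    intro t ht
    have hcs := dot_cs_H' hH.posSemidef (ζ t) (d t)
    have hdot : ζ t ⬝ᵥ (H *ᵥ v t)
        = -(ζ t ⬝ᵥ (Qm *ᵥ ζ t)) - (1/2) * (ζ t ⬝ᵥ (B *ᵥ ζ t))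
          + τ * ζ t i0 * ζ t i0 + ζ t ⬝ᵥ (H *ᵥ d t) := by
      rw [hHv t]
      rw [dotProduct_add, dotProduct_add, dotProduct_add,
        dotProduct_neg, dotProduct_smul, dotProduct_smul, hζe (ζ t)]
      simp only [smul_eq_mul]
      ring
    have hQnn := hQ2 (ζ t)
    have hBval := hB2 (ζ t)
    have hsq : 0 ≤ ζ t i1 * ζ t i1 := mul_self_nonneg _
    have hsq0 : 0 ≤ ζ t i0 * ζ t i0 := mul_self_nonneg _
    have : ζ t ⬝ᵥ (H *ᵥ v t) ≤ Real.sqrt (E t) * g t := by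
      rw [hdot, hBval]
      have hτ' : (τ + 1/2) * (ζ t i0 * ζ t i0) ≤ 0 :=
        mul_nonpos_of_nonpos_of_nonneg (by linarith) hsq0
      calc -(ζ t ⬝ᵥ (Qm *ᵥ ζ t)) - 1/2 * (-(ζ t i0 * ζ t i0) + ζ t i1 * ζ t i1)
            + τ * ζ t i0 * ζ t i0 + ζ t ⬝ᵥ (H *ᵥ d t)
          ≤ ζ t ⬝ᵥ (H *ᵥ d t) := by nlinarith
        _ ≤ Real.sqrt (E t) * g t := hcs
    calc E' t = 2 * (ζ t ⬝ᵥ (H *ᵥ v t)) := rfl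
      _ ≤ 2 * (Real.sqrt (E t) * g t) := by linarith
      _ = 2 * Real.sqrt (E t) * g t := by ring
  -- continuity of g
  have hquad : Continuous fun x : Fin n → ℝ => x ⬝ᵥ (H *ᵥ x) := by
    simp only [dotProduct, Matrix.mulVec]
    exact continuous_finset_sum _ fun i _ =>
      (continuous_apply i).mul (continuous_finset_sum _ fun j _ =>
        continuous_const.mul (continuous_apply j))
  have hgcont : ContinuousOn g (Set.Icc (0:ℝ) T) :=
    Real.continuous_sqrt.comp_continuousOn (hquad.comp_continuousOn hd)
  -- apply the gronwall lemma
  exact gronwall_aux' T hT E E' g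
    (fun t ht => hasDerivAt_quadform' H hsymm (hζ t ht))
    (fun t _ => by simpa using hH.posSemidef.dotProduct_mulVec_nonneg (ζ t))
    hgcont
    (fun t _ => Real.sqrt_nonneg _)
    hkey
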